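/- For every cover U of a nonempty finite set X there exists a non-nested flag cover U* of X such that U refines U*, and U* refines every non-nested flag cover V of X that U refines. -/

import Mathlib

/-- A cover of a set: a collection of nonempty subsets whose union is everything. -/
def IsCover {X : Type*} (C : Set (Set X)) : Prop :=
  (∀ A ∈ C, A.Nonempty) ∧ ⋃₀ C = Set.univ

/-- `C₁` refines `C₂` if every member of `C₁` is contained in some member of `C₂`. -/
def Refines {X : Type*} (C₁ C₂ : Set (Set X)) : Prop :=
  ∀ A ∈ C₁, ∃ B ∈ C₂, A ⊆ B

/-- A non-nested flag cover: a cover that is non-nested and satisfies the flag condition. -/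
def IsFlagCover {X : Type*} (C : Set (Set X)) : Prop :=
  IsCover C ∧
  (∀ A ∈ C, ∀ B ∈ C, A ⊆ B → A = B) ∧
  (∀ S : Set X, (∀ x ∈ S, ∀ y ∈ S, ∃ A ∈ C, x ∈ A ∧ y ∈ A) → ∃ A ∈ C, S ⊆ A)

/-- every cover `U` of a nonempty finite set admits a flagification `U*`:
a non-nested flag cover refined by `U` and refining every non-nested flag cover
that `U` refines. -/
theorem exists_flagification {X : Type*} [Fintype X] [Nonempty X]
    (U : Set (Set X)) (hU : IsCover U) :
    ∃ Ustar : Set (Set X), IsFlagCover Ustar ∧ Refines U Ustar ∧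
      ∀ V : Set (Set X), IsFlagCover V → Refines U V → Refines Ustar V := by
  classical
  -- `Cl S` : every pair of points of `S` lies in some member of `U`.
  set Cl : Set X → Prop := fun S => ∀ x ∈ S, ∀ y ∈ S, ∃ A ∈ U, x ∈ A ∧ y ∈ A with hCldef
  -- every clique extends to a maximal clique
  have hext : ∀ S, Cl S → ∃ M, Cl M ∧ S ⊆ M ∧ ∀ T, Cl T → M ⊆ T → M = T := by
    intro S hS
    obtain ⟨M, hM, hmax⟩ := Set.Finite.exists_maximalFor (id : Set X → Set X)
      {T | Cl T ∧ S ⊆ T} (Set.toFinite _) ⟨S, hS, subset_rfl⟩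
    exact ⟨M, hM.1, hM.2, fun T hT hMT => le_antisymm hMT (hmax ⟨hT, hM.2.trans hMT⟩ hMT)⟩
  -- every point lies in some member of U
  have hpt : ∀ x : X, ∃ A ∈ U, x ∈ A := by
    intro x
    have : x ∈ ⋃₀ U := hU.2 ▸ Set.mem_univ x
    simpa using this
  have hsing : ∀ x : X, Cl {x} := by
    intro x a ha b hb
    obtain ⟨A, hA, hxA⟩ := hpt x
    simp only [Set.mem_singleton_iff] at ha hb
    subst ha; subst hb
    exact ⟨A, hA, hxA, hxA⟩
  refine ⟨{M | Cl M ∧ ∀ T, Cl T → M ⊆ T → M = T}, ⟨⟨?_, ?_⟩, ?_, ?_⟩, ?_, ?_⟩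
  · -- nonempty members
    rintro A ⟨hA, hAmax⟩
    rcases A.eq_empty_or_nonempty with h | h
    · obtain ⟨x⟩ := ‹Nonempty X›
      have := hAmax {x} (hsing x) (h ▸ Set.empty_subset _)
      exact this ▸ ⟨x, rfl⟩
    · exact h
  · -- covers
    apply Set.eq_univ_of_forall
    intro x
    obtain ⟨M, hM, hxM, hmax⟩ := hext {x} (hsing x)
    exact ⟨M, ⟨hM, hmax⟩, hxM rfl⟩
  · -- non-nested
    rintro A ⟨hA, hAmax⟩ B ⟨hB, _⟩ hAB
    exact hAmax B hB hAB
  · -- flag condition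
    intro S hS
    have hSCl : Cl S := by
      intro x hx y hy
      obtain ⟨A, ⟨hACl, _⟩, hxA, hyA⟩ := hS x hx y hy
      exact hACl x hxA y hyA
    obtain ⟨M, hM, hSM, hmax⟩ := hext S hSCl
    exact ⟨M, ⟨hM, hmax⟩, hSM⟩
  · -- U refines Ustar
    intro A hA
    have hACl : Cl A := fun x hx y hy => ⟨A, hA, hx, hy⟩
    obtain ⟨M, hM, hAM, hmax⟩ := hext A hACl
    exact ⟨M, ⟨hM, hmax⟩, hAM⟩
  · -- Ustar refines every flag cover refined by U
    rintro V hV hUV M ⟨hM, _⟩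
    refine hV.2.2 M ?_
    intro x hx y hy
    obtain ⟨A, hA, hxA, hyA⟩ := hM x hx y hy
    obtain ⟨B, hB, hAB⟩ := hUV A hA
    exact ⟨B, hB, hAB hxA, hAB hyA⟩
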